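/- Let A, C, D, B be complex matrices of compatible sizes with A and D square, and set S = A − C D^d B and S_A = S A A^d. If A^π C D^d B = 0, then S^d = S_A^d + ∑_{i=0}^{k-1} (S_A^d)^{i+2} S A^i A^π, where k = ind(A). -/

import Mathlib

open Matrix Finset

attribute [local instance] Classical.propDecidable

noncomputable def drazin {n : Type*} [Fintype n] [DecidableEq n]
    (A : Matrix n n ℂ) : Matrix n n ℂ :=
  if h : ∃ X : Matrix n n ℂ,
      A * X = X * A ∧ X * A * X = X ∧ ∃ k : ℕ, A ^ (k + 1) * X = A ^ k
  then h.choose else 0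

noncomputable def ind {n : Type*} [Fintype n] [DecidableEq n]
    (A : Matrix n n ℂ) : ℕ :=
  sInf {k : ℕ | (A ^ k).rank = (A ^ (k + 1)).rank}

noncomputable def spi {n : Type*} [Fintype n] [DecidableEq n]
    (A : Matrix n n ℂ) : Matrix n n ℂ :=
  1 - A * drazin A


section Basic
open Polynomial
variable {n : Type*} [Fintype n] [DecidableEq n]

def IsDrazin (A X : Matrix n n ℂ) : Prop :=
  A * X = X * A ∧ X * A * X = X ∧ ∃ k : ℕ, A ^ (k + 1) * X = A ^ k

theorem exists_isDrazin (A : Matrix n n ℂ) : ∃ X, IsDrazin A X := by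
  classical
  have hp0 : A.charpoly ≠ 0 := A.charpoly_monic.ne_zero
  obtain ⟨q, hq, hnd⟩ := A.charpoly.exists_eq_pow_rootMultiplicity_mul_and_not_dvd hp0 0
  set r := A.charpoly.rootMultiplicity 0 with hr
  rw [map_zero, sub_zero] at hq hnd
  have hc0 : q.coeff 0 ≠ 0 := fun hc => hnd (X_dvd_iff.2 hc)
  set c : ℂ := q.coeff 0 with hcdef
  -- aeval A charpoly = 0
  have hch : (aeval A) A.charpoly = 0 := A.aeval_self_charpoly
  have hqA : A ^ r * (aeval A) q = 0 := by
    have h2 : (aeval A) (X ^ r * q) = 0 := by rw [← hq]; exact hch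
    simpa [_root_.map_mul, map_pow] using h2
  -- q = X * divX q + C c
  have hqsplit : (X : ℂ[X]) * q.divX + C c = q := X_mul_divX_add q
  set t : Matrix n n ℂ := (aeval A) q.divX with ht
  have hqA' : (aeval A) q = A * t + c • 1 := by
    conv_lhs => rw [← hqsplit]
    simp [map_add, _root_.map_mul, ht, Algebra.algebraMap_eq_smul_one]
  have hkey : A ^ (r + 1) * t = -(c • A ^ r) := by
    have h0 : A ^ r * (A * t + c • 1) = 0 := by rw [← hqA']; exact hqA
    have : A ^ r * (A * t) + c • A ^ r = 0 := by
      simpa [mul_add, Matrix.mul_smul, Matrix.smul_mul] using h0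
    have := eq_neg_of_add_eq_zero_left this
    rw [← this, pow_succ, mul_assoc]
  set u : Matrix n n ℂ := (-c⁻¹) • t with hu
  have hAu : A ^ (r + 1) * u = A ^ r := by
    rw [hu, Matrix.mul_smul, hkey]
    simp [smul_smul, inv_mul_cancel₀ hc0]
  have hcA : Commute A u := by
    have hXA : (aeval A) (X : ℂ[X]) = A := aeval_X A
    have : Commute A t := by
      rw [ht]
      calc A * (aeval A) q.divX = (aeval A) X * (aeval A) q.divX := by rw [hXA]
        _ = (aeval A) (X * q.divX) := (_root_.map_mul _ _ _).symm
        _ = (aeval A) (q.divX * X) := by rw [mul_comm]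
        _ = (aeval A) q.divX * (aeval A) X := _root_.map_mul _ _ _
        _ = (aeval A) q.divX * A := by rw [hXA]
    rw [hu]; exact this.smul_right _
  -- normal form lemma
  have hnf : ∀ a b c d : ℕ, (A ^ a * u ^ b) * (A ^ c * u ^ d) = A ^ (a + c) * u ^ (b + d) := by
    intro a b c d
    have h1 : u ^ b * A ^ c = A ^ c * u ^ b := (hcA.symm.pow_pow b c).eq
    calc (A ^ a * u ^ b) * (A ^ c * u ^ d) = A ^ a * (u ^ b * A ^ c) * u ^ d := by
            simp [mul_assoc]
      _ = A ^ a * (A ^ c * u ^ b) * u ^ d := by rw [h1]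
      _ = (A ^ a * A ^ c) * (u ^ b * u ^ d) := by simp [mul_assoc]
      _ = A ^ (a + c) * u ^ (b + d) := by rw [← pow_add, ← pow_add]
  have hpow : ∀ j : ℕ, A ^ (r + j) * u ^ j = A ^ r := by
    intro j
    induction j with
    | zero => simp
    | succ j ih =>
        have : A ^ (r + (j + 1)) * u ^ (j + 1) = (A ^ (r + 1) * u ^ 1) * (A ^ j * u ^ j) := by
          rw [hnf]; ring_nf
        rw [this, pow_one, hAu, ← mul_assoc, ← pow_add]
        exact ih
  have hexp : ∀ (a b c d : ℕ), a = c → b = d → A ^ a * u ^ b = A ^ c * u ^ d := by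
    rintro a b c d rfl rfl; rfl
  refine ⟨A ^ r * u ^ (r + 1), ?_, ?_, r, ?_⟩
  · exact (((Commute.refl A).pow_right r).mul_right (hcA.pow_right (r+1))).eq
  · calc (A ^ r * u ^ (r + 1)) * A * (A ^ r * u ^ (r + 1))
        = (A ^ r * u ^ (r + 1)) * (A ^ 1 * u ^ 0) * (A ^ r * u ^ (r + 1)) := by simp
      _ = A ^ (r + 1 + r) * u ^ (r + 1 + 0 + (r + 1)) := by rw [hnf, hnf]
      _ = (A ^ (r + (r + 1)) * u ^ (r + 1)) * u ^ (r + 1) := by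
          rw [mul_assoc, ← pow_add]
          exact hexp _ _ _ _ (by omega) (by omega)
      _ = A ^ r * u ^ (r + 1) := by rw [hpow]
  · calc A ^ (r + 1) * (A ^ r * u ^ (r + 1)) = (A ^ (r+1) * u ^ 0) * (A ^ r * u ^ (r + 1)) := by
          simp
      _ = A ^ (r + 1 + r) * u ^ (0 + (r + 1)) := by rw [hnf]
      _ = A ^ r := by
          rw [← hpow (r+1)]
          exact hexp _ _ _ _ (by omega) (by omega)

theorem spec_mono {A X : Matrix n n ℂ} (hc : A * X = X * A) {k : ℕ}
    (hk : A ^ (k + 1) * X = A ^ k) : ∀ j, k ≤ j → A ^ (j + 1) * X = A ^ j := by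
  intro j hj
  obtain ⟨d, rfl⟩ := Nat.exists_eq_add_of_le hj
  induction d with
  | zero => simpa using hk
  | succ d ih =>
      have e1 : k + (d + 1) + 1 = k + d + 1 + 1 := by omega
      have e2 : k + (d + 1) = k + d + 1 := by omega
      rw [e1, e2, pow_succ', mul_assoc, ih (by omega), ← pow_succ']

theorem isDrazin_unique {A X Y : Matrix n n ℂ} (hX : IsDrazin A X) (hY : IsDrazin A Y) :
    X = Y := by
  obtain ⟨hx1, hx2, k1, hx3⟩ := hX
  obtain ⟨hy1, hy2, k2, hy3⟩ := hY
  set m := max k1 k2 with hm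
  have hxm : A ^ (m + 1) * X = A ^ m := spec_mono hx1 hx3 m (le_max_left _ _)
  have hym : A ^ (m + 1) * Y = A ^ m := spec_mono hy1 hy3 m (le_max_right _ _)
  -- X = A * X * X and X = X * X * A
  have hax : A * (X * X) = X := by
    calc A * (X * X) = (A * X) * X := by rw [← mul_assoc]
      _ = (X * A) * X := by rw [hx1]
      _ = X := hx2
  have hxa : (X * X) * A = X := by
    calc (X * X) * A = X * (X * A) := by rw [mul_assoc]
      _ = X * (A * X) := by rw [hx1]
      _ = X := by rw [← mul_assoc]; exact hx2
  have hay : A * (Y * Y) = Y := by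
    calc A * (Y * Y) = (A * Y) * Y := by rw [mul_assoc]
      _ = (Y * A) * Y := by rw [hy1]
      _ = Y := hy2
  have haySymm : (Y * Y) * A = Y := by
    calc (Y * Y) * A = Y * (Y * A) := by rw [mul_assoc]
      _ = Y * (A * Y) := by rw [hy1]
      _ = Y := by rw [← mul_assoc]; exact hy2
  -- X = A^j * X^(j+1), etc
  have hXj : ∀ j : ℕ, X = A ^ j * X ^ (j + 1) := by
    intro j
    induction j with
    | zero => simp
    | succ j ih =>
        calc X = A * (X * X) := hax.symm
          _ = A * ((A ^ j * X ^ (j+1)) * X) := by rw [← ih]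
          _ = (A * A ^ j) * (X ^ (j+1) * X) := by simp [mul_assoc]
          _ = A ^ (j+1) * X ^ (j+2) := by rw [← pow_succ', ← pow_succ]
  have hYj : ∀ j : ℕ, Y = A ^ j * Y ^ (j + 1) := by
    intro j
    induction j with
    | zero => simp
    | succ j ih =>
        calc Y = A * (Y * Y) := hay.symm
          _ = A * ((A ^ j * Y ^ (j+1)) * Y) := by rw [← ih]
          _ = (A * A ^ j) * (Y ^ (j+1) * Y) := by simp [mul_assoc]
          _ = A ^ (j+1) * Y ^ (j+2) := by rw [← pow_succ', ← pow_succ]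
  have hXj' : ∀ j : ℕ, X = X ^ (j + 1) * A ^ j := by
    intro j
    induction j with
    | zero => simp
    | succ j ih =>
        calc X = (X * X) * A := hxa.symm
          _ = (X * (X ^ (j+1) * A ^ j)) * A := by rw [← ih]
          _ = (X * X ^ (j+1)) * (A ^ j * A) := by simp [mul_assoc]
          _ = X ^ (j+2) * A ^ (j+1) := by rw [← pow_succ', ← pow_succ]
  -- idempotents
  have hXAcomm : Commute X A := hx1.symm
  have hYAcomm : Commute A Y := hy1
  have hXAidem : ∀ j : ℕ, (X * A) ^ (j + 1) = X * A := by
    intro j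
    induction j with
    | zero => simp
    | succ j ih =>
        rw [pow_succ, ih]
        calc (X * A) * (X * A) = X * ((A * X) * A) := by simp [mul_assoc]
          _ = X * ((X * A) * A) := by rw [hx1]
          _ = ((X * X) * A) * A := by simp [mul_assoc]
          _ = X * A := by rw [hxa]
  have hAYidem : ∀ j : ℕ, (A * Y) ^ (j + 1) = A * Y := by
    intro j
    induction j with
    | zero => simp
    | succ j ih =>
        rw [pow_succ, ih]
        calc (A * Y) * (A * Y) = A * ((Y * A) * Y) := by simp [mul_assoc]
          _ = A * ((A * Y) * Y) := by rw [hy1]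
          _ = A * (A * (Y * Y)) := by simp [mul_assoc]
          _ = A * Y := by rw [hay]
  -- Y = X * A * Y
  have hY' : Y = X * (A * Y) := by
    have hAm : A ^ m = X * A ^ (m + 1) := by
      rw [← hxm, ← (hXAcomm.pow_right (m+1)).eq]
    calc Y = A ^ m * Y ^ (m + 1) := hYj m
      _ = X * A ^ (m + 1) * Y ^ (m + 1) := by rw [← hAm]
      _ = X * ((A ^ (m+1)) * (Y ^ (m+1))) := by rw [mul_assoc]
      _ = X * (A * Y) ^ (m + 1) := by rw [hYAcomm.mul_pow]
      _ = X * (A * Y) := by rw [hAYidem]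
  have hX' : X = X * A * Y := by
    calc X = X ^ (m + 1) * A ^ m := hXj' m
      _ = X ^ (m + 1) * (A ^ (m + 1) * Y) := by rw [hym]
      _ = (X ^ (m+1) * A ^ (m+1)) * Y := by rw [mul_assoc]
      _ = (X * A) ^ (m + 1) * Y := by rw [hXAcomm.mul_pow]
      _ = (X * A) * Y := by rw [hXAidem]
  rw [hX', mul_assoc, ← hY']

theorem drazin_spec (A : Matrix n n ℂ) : IsDrazin A (drazin A) := by
  have hex : ∃ X : Matrix n n ℂ,
      A * X = X * A ∧ X * A * X = X ∧ ∃ k : ℕ, A ^ (k + 1) * X = A ^ k :=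
    exists_isDrazin A
  rw [drazin, dif_pos hex]
  exact hex.choose_spec

theorem drazin_eq {A X : Matrix n n ℂ} (hX : IsDrazin A X) : drazin A = X :=
  isDrazin_unique (drazin_spec A) hX

end Basic

section Rank
variable {n : Type*} [Fintype n] [DecidableEq n]

theorem spi_pow_comm (A : Matrix n n ℂ) (i : ℕ) : spi A * A ^ i = A ^ i * spi A := by
  obtain ⟨h1, _, _⟩ := drazin_spec A
  have hc : Commute A (spi A) := by
    unfold spi
    refine Commute.sub_right (Commute.one_right A) ?_
    exact (Commute.refl A).mul_right h1
  exact ((hc.pow_left i).eq).symm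

theorem spi_mul_pow_spec (A : Matrix n n ℂ) {kd : ℕ}
    (hkd : A ^ (kd + 1) * drazin A = A ^ kd) : spi A * A ^ kd = 0 := by
  obtain ⟨h1, _, _⟩ := drazin_spec A
  have hcAd : Commute A (drazin A) := h1
  unfold spi
  rw [sub_mul, one_mul, mul_assoc]
  rw [show drazin A * A ^ kd = A ^ kd * drazin A from ((hcAd.pow_left kd).eq).symm]
  rw [← mul_assoc, ← pow_succ', hkd, sub_self]

theorem pow_spi_eq_zero_of_rank (A : Matrix n n ℂ) {j : ℕ}
    (hj : (A ^ j).rank = (A ^ (j + 1)).rank) : A ^ j * spi A = 0 := by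
  classical
  set L : ℕ → Submodule ℂ (n → ℂ) := fun i => LinearMap.range (Matrix.toLin' (A ^ i)) with hL
  have hrank : ∀ i, (A ^ i).rank = Module.finrank ℂ (L i) := by
    intro i
    rw [Matrix.rank, hL]
    simp [Matrix.toLin'_apply']
    rfl
  have hle : ∀ i, L (i + 1) ≤ L i := by
    intro i
    have : A ^ (i + 1) = A ^ i * A := pow_succ A i
    rw [hL]
    simp only [this, Matrix.toLin'_mul]
    exact LinearMap.range_comp_le_range _ _
  have heq : L (j + 1) = L j := by
    apply Submodule.eq_of_le_of_finrank_le (hle j)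
    rw [← hrank, ← hrank, hj]
  have hstep : ∀ i, L (i + 1) = Submodule.map (Matrix.toLin' A) (L i) := by
    intro i
    have : A ^ (i + 1) = A * A ^ i := (pow_succ' A i)
    rw [hL]
    simp only [this, Matrix.toLin'_mul]
    exact LinearMap.range_comp _ _
  have hall : ∀ d, L (j + d) = L j := by
    intro d
    induction d with
    | zero => rfl
    | succ d ih =>
        have : j + (d + 1) = (j + d) + 1 := by omega
        rw [this, hstep, ih, ← hstep, heq]
  obtain ⟨h1, h2, kd, hkd⟩ := drazin_spec A
  -- obtain Y with A ^ j = A ^ (j + kd) * Y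
  have hsub : L j ≤ L (j + kd) := (hall kd).ge
  obtain ⟨Y, hY⟩ : ∃ Y : Matrix n n ℂ, A ^ j = A ^ (j + kd) * Y := by
    set g := Matrix.toLin' (A ^ (j + kd))
    set f := Matrix.toLin' (A ^ j)
    have hfg : LinearMap.range f ≤ LinearMap.range g := hsub
    set f' : (n → ℂ) →ₗ[ℂ] LinearMap.range g :=
      f.codRestrict (LinearMap.range g) (fun x => hfg (LinearMap.mem_range_self f x))
    obtain ⟨hlift, hh⟩ := Module.projective_lifting_property g.rangeRestrict f'
      g.surjective_rangeRestrict
    refine ⟨LinearMap.toMatrix' hlift, ?_⟩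
    apply Matrix.toLin'.injective
    rw [Matrix.toLin'_mul, Matrix.toLin'_toMatrix']
    refine LinearMap.ext fun x => ?_
    have := LinearMap.congr_fun hh x
    have h2 := congrArg Subtype.val this
    simpa [f', f, g] using h2.symm
  have hcomm : spi A * A ^ j = A ^ j * spi A := spi_pow_comm A j
  rw [← hcomm, hY, show A ^ (j + kd) = A ^ kd * A ^ j from by rw [← pow_add]; ring_nf,
    ← mul_assoc, ← mul_assoc, spi_mul_pow_spec A hkd, zero_mul, zero_mul]

theorem pow_ind_spi (A : Matrix n n ℂ) : A ^ (ind A) * spi A = 0 := by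
  obtain ⟨h1, h2, kd, hkd⟩ := drazin_spec A
  have hmem : kd ∈ {k : ℕ | (A ^ k).rank = (A ^ (k + 1)).rank} := by
    have hle : LinearMap.range (Matrix.toLin' (A ^ (kd + 1))) ≤
        LinearMap.range (Matrix.toLin' (A ^ kd)) := by
      rw [show A ^ (kd + 1) = A ^ kd * A from pow_succ A kd, Matrix.toLin'_mul]
      exact LinearMap.range_comp_le_range _ _
    have hge : LinearMap.range (Matrix.toLin' (A ^ kd)) ≤
        LinearMap.range (Matrix.toLin' (A ^ (kd + 1))) := by
      rw [← hkd, Matrix.toLin'_mul]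
      exact LinearMap.range_comp_le_range _ _
    have : LinearMap.range (Matrix.toLin' (A ^ kd)) =
        LinearMap.range (Matrix.toLin' (A ^ (kd + 1))) := le_antisymm hge hle
    show (A ^ kd).rank = (A ^ (kd + 1)).rank
    rw [Matrix.rank, Matrix.rank, ← Matrix.toLin'_apply', ← Matrix.toLin'_apply', this]
  have := Nat.sInf_mem (⟨kd, hmem⟩ : Set.Nonempty _)
  exact pow_spi_eq_zero_of_rank A this

end Rank

set_option maxHeartbeats 3000000 in
theorem stmt1 {n m : ℕ} (A : Matrix (Fin n) (Fin n) ℂ) (D : Matrix (Fin m) (Fin m) ℂ)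
    (C : Matrix (Fin n) (Fin m) ℂ) (B : Matrix (Fin m) (Fin n) ℂ)
    (S : Matrix (Fin n) (Fin n) ℂ) (hS : S = A - C * drazin D * B)
    (SA : Matrix (Fin n) (Fin n) ℂ) (hSA : SA = S * A * drazin A)
    (h : spi A * (C * drazin D * B) = 0) :
    drazin S = drazin SA +
      ∑ i ∈ range (ind A), (drazin SA) ^ (i + 2) * S * A ^ i * spi A := by
  classical
  -- abbreviations
  set Q : Matrix (Fin n) (Fin n) ℂ := spi A with hQdef
  set X : Matrix (Fin n) (Fin n) ℂ := drazin SA with hXdef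
  set k : ℕ := ind A with hkdef
  set T : Matrix (Fin n) (Fin n) ℂ := ∑ i ∈ range k, X ^ (i + 2) * S * A ^ i * Q with hTdef
  -- power helpers
  have hp2 : ∀ (M : Matrix (Fin n) (Fin n) ℂ) (i : ℕ), M ^ (i + 2) = M * M ^ (i + 1) :=
    fun M i => pow_succ' M (i + 1)
  have hp1 : ∀ (M : Matrix (Fin n) (Fin n) ℂ) (i : ℕ), M ^ (i + 1) = M * M ^ i :=
    fun M i => pow_succ' M i
  have hps : ∀ (M : Matrix (Fin n) (Fin n) ℂ) (i : ℕ), M ^ (i + 1) = M ^ i * M :=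
    fun M i => pow_succ M i
  obtain ⟨hA1, hA2, kA, hA3⟩ := drazin_spec A
  obtain ⟨hX1, hX2, mX, hX3⟩ := drazin_spec SA
  -- basic projection facts
  have hPP : (A * drazin A) * (A * drazin A) = A * drazin A := by
    calc (A * drazin A) * (A * drazin A) = A * (drazin A * A * drazin A) := by noncomm_ring
      _ = A * drazin A := by rw [hA2]
  have hPQ : (A * drazin A) * Q = 0 := by
    have h1 : (A * drazin A) * Q = A * drazin A - (A * drazin A) * (A * drazin A) := by
      rw [hQdef]; unfold spi; noncomm_ring
    rw [h1, hPP, sub_self]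
  have hQP : Q * (A * drazin A) = 0 := by
    have h1 : Q * (A * drazin A) = A * drazin A - (A * drazin A) * (A * drazin A) := by
      rw [hQdef]; unfold spi; noncomm_ring
    rw [h1, hPP, sub_self]
  have hQQ : Q * Q = Q := by
    have h1 : Q * Q = 1 - A * drazin A - ((A * drazin A) - (A * drazin A) * (A * drazin A)) := by
      rw [hQdef]; unfold spi; noncomm_ring
    rw [h1, hPP, sub_self, sub_zero, hQdef]; rfl
  have hPplusQ : A * drazin A + Q = 1 := by
    rw [hQdef]; unfold spi; noncomm_ring
  have hQA : Q * A = A * Q := by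
    have := spi_pow_comm A 1
    rw [pow_one] at this
    rw [hQdef]; exact this
  have hQpow : ∀ i, Q * A ^ i = A ^ i * Q := fun i => by
    rw [hQdef]; exact spi_pow_comm A i
  have hAkQ : A ^ k * Q = 0 := by rw [hQdef, hkdef]; exact pow_ind_spi A
  have hAiQ : ∀ i, k ≤ i → A ^ i * Q = 0 := by
    intro i hi
    have h1 : A ^ i = A ^ (i - k) * A ^ k := by rw [← pow_add]; congr 1; omega
    rw [h1, mul_assoc, hAkQ, mul_zero]
  have hQS : Q * S = A * Q := by
    rw [hS, mul_sub, h, sub_zero, hQA]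
  have hSP : S * (A * drazin A) = SA := by rw [hSA, mul_assoc]
  have hQSA : Q * SA = 0 := by
    rw [hSA]
    calc Q * (S * A * drazin A) = (Q * S) * (A * drazin A) := by noncomm_ring
      _ = (A * Q) * (A * drazin A) := by rw [hQS]
      _ = A * (Q * (A * drazin A)) := by noncomm_ring
      _ = 0 := by rw [hQP, mul_zero]
  have hSAQ : SA * Q = 0 := by
    rw [hSA]
    calc S * A * drazin A * Q = S * ((A * drazin A) * Q) := by noncomm_ring
      _ = 0 := by rw [hPQ, mul_zero]
  have hXSA2 : SA * (X * X) = X := by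
    calc SA * (X * X) = (SA * X) * X := by noncomm_ring
      _ = (X * SA) * X := by rw [hX1]
      _ = X := hX2
  have hX2' : X * X * SA = X := by
    calc X * X * SA = X * (SA * X) := by rw [mul_assoc, ← hX1]
      _ = (X * SA) * X := by noncomm_ring
      _ = X := hX2
  have hXQ : X * Q = 0 := by
    calc X * Q = (X * X * SA) * Q := by rw [hX2']
      _ = (X * X) * (SA * Q) := by noncomm_ring
      _ = 0 := by rw [hSAQ, mul_zero]
  have hQX : Q * X = 0 := by
    have hx : SA * (X * X) = X := hXSA2
    calc Q * X = Q * (SA * (X * X)) := by rw [hx]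
      _ = (Q * SA) * (X * X) := by noncomm_ring
      _ = 0 := by rw [hQSA, zero_mul]
  have hPX : (A * drazin A) * X = X := by
    have h1 : (A * drazin A) * X = (A * drazin A + Q) * X - Q * X := by noncomm_ring
    rw [h1, hPplusQ, hQX, sub_zero, one_mul]
  have hSAXX : ∀ M, SA * (X * (X * M)) = X * M := by
    intro M
    calc SA * (X * (X * M)) = (SA * (X * X)) * M := by noncomm_ring
      _ = X * M := by rw [hXSA2]
  have hSX : S * X = SA * X := by
    calc S * X = S * ((A * drazin A) * X) := by rw [hPX]
      _ = (S * (A * drazin A)) * X := by noncomm_ring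
      _ = SA * X := by rw [hSP]
  have hSSA : S * SA = SA * SA := by
    have hPSA : (A * drazin A) * SA = SA := by
      have h1 : (A * drazin A) * SA = (A * drazin A + Q) * SA - Q * SA := by noncomm_ring
      rw [h1, hPplusQ, hQSA, sub_zero, one_mul]
    calc S * SA = S * ((A * drazin A) * SA) := by rw [hPSA]
      _ = (S * (A * drazin A)) * SA := by noncomm_ring
      _ = SA * SA := by rw [hSP]
  have hSSAn : ∀ M : ℕ, S * SA ^ (M + 1) = SA ^ (M + 2) := by
    intro M
    calc S * SA ^ (M + 1) = S * (SA * SA ^ M) := by rw [hp1]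
      _ = (S * SA) * SA ^ M := by noncomm_ring
      _ = (SA * SA) * SA ^ M := by rw [hSSA]
      _ = SA * SA ^ (M + 1) := by rw [mul_assoc, ← hp1]
      _ = SA ^ (M + 2) := by rw [← hp2]
  have hSNP : ∀ N : ℕ, S ^ (N + 1) * (A * drazin A) = SA ^ (N + 1) := by
    intro N
    induction N with
    | zero => simpa using hSP
    | succ N ih =>
        calc S ^ (N + 2) * (A * drazin A) = S * (S ^ (N + 1) * (A * drazin A)) := by
              rw [hp2]; noncomm_ring
          _ = S * SA ^ (N + 1) := by rw [ih]
          _ = SA ^ (N + 2) := hSSAn N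
  -- the key sum formula for S^(N+1) * Q
  have hSum : ∀ N : ℕ, S ^ (N + 1) * Q =
      ∑ i ∈ range (N + 1), SA ^ (N - i) * S * A ^ i * Q := by
    intro N
    induction N with
    | zero => simp [mul_assoc]
    | succ N ih =>
        have hstep : S ^ (N + 2) * Q =
            SA ^ (N + 1) * (S * Q) + (S ^ (N + 1) * Q) * (S * Q) := by
          have e1 : S ^ (N + 2) * Q = (S ^ (N + 1) * 1) * (S * Q) := by
            rw [hps S (N+1)]; noncomm_ring
          rw [e1, ← hPplusQ]
          calc (S ^ (N + 1) * (A * drazin A + Q)) * (S * Q)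
              = (S ^ (N + 1) * (A * drazin A)) * (S * Q) + (S ^ (N + 1) * Q) * (S * Q) := by
                noncomm_ring
            _ = SA ^ (N + 1) * (S * Q) + (S ^ (N + 1) * Q) * (S * Q) := by rw [hSNP]
        rw [hstep, ih, Finset.sum_mul]
        have hterm : ∀ i, (SA ^ (N - i) * S * A ^ i * Q) * (S * Q) =
            SA ^ (N - i) * S * A ^ (i + 1) * Q := by
          intro i
          calc (SA ^ (N - i) * S * A ^ i * Q) * (S * Q)
              = (SA ^ (N - i) * S) * (A ^ i * ((Q * S) * Q)) := by noncomm_ring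
            _ = (SA ^ (N - i) * S) * (A ^ i * ((A * Q) * Q)) := by rw [hQS]
            _ = (SA ^ (N - i) * S) * ((A ^ i * A) * (Q * Q)) := by noncomm_ring
            _ = (SA ^ (N - i) * S) * (A ^ (i + 1) * Q) := by rw [← hps, hQQ]
            _ = SA ^ (N - i) * S * A ^ (i + 1) * Q := by noncomm_ring
        rw [Finset.sum_congr rfl (fun i _ => hterm i)]
        rw [Finset.sum_range_succ' (fun i => SA ^ (N + 1 - i) * S * A ^ i * Q) (N + 1)]
        simp only [Nat.succ_sub_succ, Nat.sub_zero, pow_zero, mul_one]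
        rw [add_comm]
        congr 1
        simp [mul_assoc]
  have hTrunc : ∀ N : ℕ, k ≤ N + 1 → S ^ (N + 1) * Q =
      ∑ i ∈ range k, SA ^ (N - i) * S * A ^ i * Q := by
    intro N hN
    rw [hSum N]
    symm
    apply Finset.sum_subset
    · exact Finset.range_subset_range.2 (by omega)
    · intro i hi hni
      simp only [Finset.mem_range] at hi hni
      have : SA ^ (N - i) * S * A ^ i * Q = (SA ^ (N - i) * S) * (A ^ i * Q) := by
        noncomm_ring
      rw [this, hAiQ i (by omega), mul_zero]
  -- compute S * W
  have hSAXp : ∀ i : ℕ, SA * X ^ (i + 2) = X ^ (i + 1) := by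
    intro i
    rw [hp2 X i, hp1 X i, hSAXX, ← hp1]
  have hSX2 : ∀ i : ℕ, S * X ^ (i + 2) = X ^ (i + 1) := by
    intro i
    calc S * X ^ (i + 2) = S * (X * X ^ (i + 1)) := by rw [hp2]
      _ = (S * X) * X ^ (i + 1) := by noncomm_ring
      _ = (SA * X) * X ^ (i + 1) := by rw [hSX]
      _ = SA * (X * X ^ (i + 1)) := by noncomm_ring
      _ = SA * X ^ (i + 2) := by rw [← hp2]
      _ = X ^ (i + 1) := hSAXp i
  have hST : S * T = ∑ i ∈ range k, X ^ (i + 1) * S * A ^ i * Q := by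
    rw [hTdef, Finset.mul_sum]
    refine Finset.sum_congr rfl fun i _ => ?_
    calc S * (X ^ (i + 2) * S * A ^ i * Q) = (S * X ^ (i + 2)) * (S * (A ^ i * Q)) := by
          noncomm_ring
      _ = X ^ (i + 1) * (S * (A ^ i * Q)) := by rw [hSX2]
      _ = X ^ (i + 1) * S * A ^ i * Q := by noncomm_ring
  have hSWeq : S * (X + T) = SA * X + ∑ i ∈ range k, X ^ (i + 1) * S * A ^ i * Q := by
    rw [mul_add, hSX, hST]
  have hXS : X * S = X * SA + X * (S * Q) := by
    have e1 : X * S = X * (S * (A * drazin A + Q)) := by rw [hPplusQ, mul_one]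
    rw [e1]
    calc X * (S * (A * drazin A + Q))
        = X * (S * (A * drazin A)) + X * (S * Q) := by noncomm_ring
      _ = X * SA + X * (S * Q) := by rw [hSP]
  have hTS : T * S = ∑ i ∈ range k, X ^ (i + 2) * S * A ^ (i + 1) * Q := by
    rw [hTdef, Finset.sum_mul]
    refine Finset.sum_congr rfl fun i _ => ?_
    calc (X ^ (i + 2) * S * A ^ i * Q) * S = (X ^ (i + 2) * S) * (A ^ i * (Q * S)) := by
          noncomm_ring
      _ = (X ^ (i + 2) * S) * (A ^ i * (A * Q)) := by rw [hQS]
      _ = (X ^ (i + 2) * S) * ((A ^ i * A) * Q) := by noncomm_ring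
      _ = (X ^ (i + 2) * S) * (A ^ (i + 1) * Q) := by rw [← hps]
      _ = X ^ (i + 2) * S * A ^ (i + 1) * Q := by noncomm_ring
  have hWSeq : (X + T) * S =
      X * SA + (X * (S * Q) + ∑ i ∈ range k, X ^ (i + 2) * S * A ^ (i + 1) * Q) := by
    rw [add_mul, hXS, hTS, add_assoc]
  -- the shift identity
  have hkey : X * (S * Q) + ∑ i ∈ range k, X ^ (i + 2) * S * A ^ (i + 1) * Q =
      ∑ i ∈ range k, X ^ (i + 1) * S * A ^ i * Q := by
    have h1 := Finset.sum_range_succ' (fun i => X ^ (i + 1) * S * A ^ i * Q) k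
    have h2 := Finset.sum_range_succ (fun i => X ^ (i + 1) * S * A ^ i * Q) k
    have hgk : X ^ (k + 1) * S * A ^ k * Q = 0 := by
      rw [mul_assoc, hAkQ, mul_zero]
    rw [hgk, add_zero] at h2
    have hg0 : X ^ (0 + 1) * S * A ^ 0 * Q = X * (S * Q) := by
      simp [mul_assoc]
    rw [hg0] at h1
    have hbody : ∀ i, X ^ (i + 1 + 1) * S * A ^ (i + 1) * Q =
        X ^ (i + 2) * S * A ^ (i + 1) * Q := fun i => rfl
    rw [Finset.sum_congr rfl (fun i _ => hbody i)] at h1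
    rw [← h2, h1, add_comm]
  have c1 : S * (X + T) = (X + T) * S := by
    rw [hSWeq, hWSeq, hX1, hkey]
  have c2 : (X + T) * S * (X + T) = X + T := by
    have e0 : (X + T) * S * (X + T) = (S * (X + T)) * (X + T) := by rw [c1]
    rw [e0, hSWeq, add_mul]
    have p1 : (SA * X) * (X + T) = X + T := by
      have p1a : (SA * X) * X = X := by rw [mul_assoc, hXSA2]
      have p1b : (SA * X) * T = T := by
        conv_lhs => rw [hTdef]
        rw [Finset.mul_sum, hTdef]
        refine Finset.sum_congr rfl fun i _ => ?_
        calc (SA * X) * (X ^ (i + 2) * S * A ^ i * Q)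
            = SA * (X * (X * (X ^ (i + 1) * (S * (A ^ i * Q))))) := by
              rw [hp2 X i]; noncomm_ring
          _ = X * (X ^ (i + 1) * (S * (A ^ i * Q))) := by rw [hSAXX]
          _ = X ^ (i + 2) * S * A ^ i * Q := by rw [hp2 X i]; noncomm_ring
      rw [mul_add, p1a, p1b]
    have p2 : (∑ i ∈ range k, X ^ (i + 1) * S * A ^ i * Q) * (X + T) = 0 := by
      have hQW : Q * (X + T) = 0 := by
        rw [mul_add, hQX, hTdef, Finset.mul_sum, zero_add]
        have : ∀ i ∈ range k, Q * (X ^ (i + 2) * S * A ^ i * Q) = 0 := by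
          intro i _
          calc Q * (X ^ (i + 2) * S * A ^ i * Q)
              = (Q * X) * (X ^ (i + 1) * (S * (A ^ i * Q))) := by rw [hp2 X i]; noncomm_ring
            _ = 0 := by rw [hQX, zero_mul]
        rw [Finset.sum_congr rfl this, Finset.sum_const_zero]
      rw [Finset.sum_mul]
      have : ∀ i ∈ range k, (X ^ (i + 1) * S * A ^ i * Q) * (X + T) = 0 := by
        intro i _
        calc (X ^ (i + 1) * S * A ^ i * Q) * (X + T)
            = (X ^ (i + 1) * S * A ^ i) * (Q * (X + T)) := by noncomm_ring
          _ = 0 := by rw [hQW, mul_zero]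
      rw [Finset.sum_congr rfl this, Finset.sum_const_zero]
    rw [p1, p2, add_zero]
  have c3 : ∃ k3 : ℕ, S ^ (k3 + 1) * (X + T) = S ^ k3 := by
    refine ⟨mX + k + 1, ?_⟩
    set N' : ℕ := mX + k with hN'
    have hXmono : ∀ j, mX ≤ j → SA ^ (j + 1) * X = SA ^ j := spec_mono hX1 hX3
    have hpowX : ∀ b a : ℕ, mX + b ≤ a → SA ^ a * X ^ b = SA ^ (a - b) := by
      intro b
      induction b with
      | zero => intro a _; simp
      | succ b ih =>
          intro a ha
          calc SA ^ a * X ^ (b + 1) = (SA ^ a * X ^ b) * X := by rw [hps X b]; noncomm_ring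
            _ = SA ^ (a - b) * X := by rw [ih a (by omega)]
            _ = SA ^ ((a - (b + 1)) + 1) * X := by
                  have e : a - b = (a - (b + 1)) + 1 := by omega
                  rw [e]
            _ = SA ^ (a - (b + 1)) := hXmono _ (by omega)
    have hPXp : ∀ i : ℕ, (A * drazin A) * X ^ (i + 2) = X ^ (i + 2) := by
      intro i
      calc (A * drazin A) * X ^ (i + 2) = ((A * drazin A) * X) * X ^ (i + 1) := by
            rw [hp2 X i]; noncomm_ring
        _ = X * X ^ (i + 1) := by rw [hPX]
        _ = X ^ (i + 2) := by rw [← hp2]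
    have lhsX : S ^ (N' + 2) * X = SA ^ (N' + 1) := by
      calc S ^ (N' + 2) * X = S ^ (N' + 2) * ((A * drazin A) * X) := by rw [hPX]
        _ = (S ^ (N' + 2) * (A * drazin A)) * X := by noncomm_ring
        _ = SA ^ (N' + 2) * X := by rw [hSNP (N' + 1)]
        _ = SA ^ (N' + 1) := hXmono _ (by omega)
    have lhsT : S ^ (N' + 2) * T = ∑ i ∈ range k, SA ^ (N' - i) * S * A ^ i * Q := by
      rw [hTdef, Finset.mul_sum]
      refine Finset.sum_congr rfl fun i hi => ?_
      have hik : i < k := Finset.mem_range.1 hi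
      calc S ^ (N' + 2) * (X ^ (i + 2) * S * A ^ i * Q)
          = S ^ (N' + 2) * (((A * drazin A) * X ^ (i + 2)) * (S * (A ^ i * Q))) := by
            rw [hPXp]; noncomm_ring
        _ = (S ^ (N' + 2) * (A * drazin A)) * (X ^ (i + 2) * (S * (A ^ i * Q))) := by
            noncomm_ring
        _ = SA ^ (N' + 2) * (X ^ (i + 2) * (S * (A ^ i * Q))) := by rw [hSNP (N' + 1)]
        _ = (SA ^ (N' + 2) * X ^ (i + 2)) * (S * (A ^ i * Q)) := by noncomm_ring
        _ = SA ^ (N' + 2 - (i + 2)) * (S * (A ^ i * Q)) := by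
            rw [hpowX (i + 2) (N' + 2) (by omega)]
        _ = SA ^ (N' - i) * (S * (A ^ i * Q)) := by congr 2; omega
        _ = SA ^ (N' - i) * S * A ^ i * Q := by noncomm_ring
    have rhs : S ^ (N' + 1) = SA ^ (N' + 1) + ∑ i ∈ range k, SA ^ (N' - i) * S * A ^ i * Q := by
      have e1 : S ^ (N' + 1) = S ^ (N' + 1) * (A * drazin A) + S ^ (N' + 1) * Q := by
        rw [← mul_add, hPplusQ, mul_one]
      rw [e1, hSNP N', hTrunc N' (by omega)]
    rw [mul_add, lhsX, lhsT, rhs]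
  exact drazin_eq ⟨c1, c2, c3⟩
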